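/- For every integer n > 1, the friendship graph F_n is 2-edge distance-balanced. -/

import Mathlib

open SimpleGraph

/-- Distance from a vertex to an edge (as an unordered pair): the minimum of
the distances to the two endpoints. -/
noncomputable def eDist {V : Type*} (G : SimpleGraph V) (g : V) (f : Sym2 V) : ℕ :=
  Sym2.lift ⟨fun x y => min (G.dist g x) (G.dist g y), fun _ _ => min_comm _ _⟩ f

/-- The number of edges of `G` that are closer to `g` than to `h`. -/
noncomputable def mCloser {V : Type*} (G : SimpleGraph V) (g h : V) : ℕ :=
  {f ∈ G.edgeSet | eDist G g f < eDist G h f}.ncard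

/-- `G` is 2-edge distance-balanced. -/
def TwoEDB {V : Type*} (G : SimpleGraph V) : Prop :=
  ∀ g h : V, G.dist g h = 2 → mCloser G g h = mCloser G h g

/-- The friendship graph `F n`: `n` triangles all sharing one common hub vertex `none`.
The vertex `some (i, j)` (`j : Fin 2`) is one of the two outer vertices of the `i`-th
triangle: the hub is adjacent to every outer vertex, and `some (i, 0)` is adjacent to
`some (i, 1)` for each `i`, with no other edges. -/
def friendshipGraph (n : ℕ) : SimpleGraph (Option (Fin n × Fin 2)) where
  Adj x y := x ≠ y ∧
    (x = none ∨ y = none ∨ ∃ p q, x = some p ∧ y = some q ∧ p.1 = q.1)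
  symm := by
    constructor
    rintro x y ⟨hne, h | h | ⟨p, q, hx, hy, h⟩⟩
    · exact ⟨hne.symm, Or.inr (Or.inl h)⟩
    · exact ⟨hne.symm, Or.inl h⟩
    · exact ⟨hne.symm, Or.inr (Or.inr ⟨q, p, hy, hx, h.symm⟩)⟩
  loopless := by constructor; rintro x ⟨hne, -⟩; exact hne rfl

namespace FGaux

variable {n : ℕ}

lemma adj_hub (p : Fin n × Fin 2) : (friendshipGraph n).Adj none (some p) :=
  ⟨by simp, Or.inl rfl⟩

lemma adj_some {p q : Fin n × Fin 2} (h1 : p ≠ q) (h2 : p.1 = q.1) :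
    (friendshipGraph n).Adj (some p) (some q) :=
  ⟨by simpa using h1, Or.inr (Or.inr ⟨p, q, rfl, rfl, h2⟩)⟩

lemma adj_some_iff {r s : Fin n × Fin 2} :
    (friendshipGraph n).Adj (some r) (some s) ↔ r ≠ s ∧ r.1 = s.1 := by
  constructor
  · rintro ⟨hne, h | h | ⟨a, b, ha, hb, hab⟩⟩
    · exact absurd h (by simp)
    · exact absurd h (by simp)
    · obtain rfl : r = a := by injection ha
      obtain rfl : s = b := by injection hb
      exact ⟨by simpa using hne, hab⟩
  · rintro ⟨h1, h2⟩; exact adj_some h1 h2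

lemma dist_hub (p : Fin n × Fin 2) : (friendshipGraph n).dist none (some p) = 1 :=
  dist_eq_one_iff_adj.2 (adj_hub p)

lemma dist_hub' (p : Fin n × Fin 2) : (friendshipGraph n).dist (some p) none = 1 :=
  dist_eq_one_iff_adj.2 (adj_hub p).symm

lemma dist_some_some (p q : Fin n × Fin 2) :
    (friendshipGraph n).dist (some p) (some q) =
      if p = q then 0 else if p.1 = q.1 then 1 else 2 := by
  split_ifs with h1 h2
  · subst h1; simp
  · exact dist_eq_one_iff_adj.2 (adj_some h1 h2)
  · have hle : (friendshipGraph n).dist (some p) (some q) ≤ 2 := by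
      have := dist_le (.cons ((adj_hub p).symm) (.cons (adj_hub q) .nil))
      simpa using this
    have h0 : (friendshipGraph n).dist (some p) (some q) ≠ 0 := by
      rw [dist_ne_zero_iff_ne_and_reachable]
      exact ⟨by simpa using h1,
        ⟨.cons ((adj_hub p).symm) (.cons (adj_hub q) .nil)⟩⟩
    have hne1 : (friendshipGraph n).dist (some p) (some q) ≠ 1 := by
      rw [Ne, dist_eq_one_iff_adj, adj_some_iff]
      rintro ⟨-, h⟩; exact h2 h
    omega

lemma eDist_mk (G : SimpleGraph (Option (Fin n × Fin 2))) (g : Option (Fin n × Fin 2))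
    (x y : Option (Fin n × Fin 2)) : eDist G g s(x, y) = min (G.dist g x) (G.dist g y) := rfl

lemma mCloser_eq {p q : Fin n × Fin 2} (hpq : p.1 ≠ q.1) :
    mCloser (friendshipGraph n) (some p) (some q) = 2 := by
  have fin2 : ∀ a b : Fin 2, a ≠ b → b = a + 1 := by decide
  have fin2' : ∀ a : Fin 2, a + 1 + 1 = a := by decide
  set p' : Fin n × Fin 2 := (p.1, p.2 + 1) with hp'
  have hpp' : p ≠ p' := fun h => (by decide : ∀ a : Fin 2, a ≠ a + 1) p.2 (congrArg Prod.snd h)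
  have hqp : q ≠ p := fun h => hpq (congrArg Prod.fst h).symm
  have hqp1 : q.1 ≠ p.1 := Ne.symm hpq
  have hqp'1 : q.1 ≠ p'.1 := by rw [hp']; exact hqp1
  have hqp' : q ≠ p' := fun h => hqp'1 (congrArg Prod.fst h)
  have hset : {f ∈ (friendshipGraph n).edgeSet |
      eDist (friendshipGraph n) (some p) f < eDist (friendshipGraph n) (some q) f} =
      {s((none : Option (Fin n × Fin 2)), some p), s(some p, some p')} := by
    ext f
    induction f using Sym2.ind with
    | _ x y =>
      simp only [Set.mem_sep_iff, mem_edgeSet, Set.mem_insert_iff, Set.mem_singleton_iff]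
      rcases x with _ | r <;> rcases y with _ | s
      · constructor
        · rintro ⟨⟨hne, -⟩, -⟩; exact absurd rfl hne
        · rintro (h | h) <;> simp [Sym2.eq_iff] at h
      · rw [eDist_mk, eDist_mk, dist_hub', dist_hub', dist_some_some, dist_some_some]
        have hrhs : (s((none : Option (Fin n × Fin 2)), some s) = s(none, some p) ∨
            s((none : Option (Fin n × Fin 2)), some s) = s(some p, some p')) ↔ s = p := by
          simp [Sym2.eq_iff]
        rw [hrhs]
        constructor
        · rintro ⟨-, hlt⟩
          split_ifs at hlt with h1 h2 h3 h4 <;> first | exact (‹p = s›).symm | omega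
        · rintro rfl
          refine ⟨adj_hub s, ?_⟩
          simp [hqp, hqp1]
      · rw [eDist_mk, eDist_mk, dist_hub', dist_hub', dist_some_some, dist_some_some]
        have hrhs : (s(some r, (none : Option (Fin n × Fin 2))) = s(none, some p) ∨
            s(some r, (none : Option (Fin n × Fin 2))) = s(some p, some p')) ↔ r = p := by
          simp [Sym2.eq_iff]
        rw [hrhs]
        constructor
        · rintro ⟨-, hlt⟩
          split_ifs at hlt with h1 h2 h3 h4 <;> first | exact (‹p = r›).symm | omega
        · rintro rfl
          refine ⟨(adj_hub r).symm, ?_⟩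
          simp [hqp, hqp1]
      · rw [eDist_mk, eDist_mk, dist_some_some, dist_some_some, dist_some_some, dist_some_some,
          adj_some_iff]
        have hrhs : (s(some r, some s) = s((none : Option (Fin n × Fin 2)), some p) ∨
            s(some r, some s) = s(some p, some p')) ↔
            ((r = p ∧ s = p') ∨ (r = p' ∧ s = p)) := by
          simp [Sym2.eq_iff]
        rw [hrhs]
        constructor
        · rintro ⟨⟨hne, h1⟩, hlt⟩
          by_cases hr1 : r.1 = p.1
          · by_cases hrp : r = p
            · subst hrp
              left
              refine ⟨rfl, ?_⟩
              have hs1 : s.1 = r.1 := h1.symm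
              have hs2 : s.2 = r.2 + 1 := fin2 r.2 s.2 (fun h => hne (Prod.ext h1 h))
              exact Prod.ext hs1 hs2
            · right
              have hr2 : r.2 = p.2 + 1 := fin2 p.2 r.2 (fun h => hrp (Prod.ext hr1 h.symm))
              have hrp' : r = p' := Prod.ext hr1 hr2
              refine ⟨hrp', ?_⟩
              have hs1 : s.1 = p.1 := h1.symm.trans hr1
              have hs2 : s.2 = p.2 := by
                have hss : s.2 = r.2 + 1 := fin2 r.2 s.2 (fun h => hne (Prod.ext h1 h))
                rw [hss, hr2, fin2']
              exact Prod.ext hs1 hs2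
          · exfalso
            have hs1 : s.1 ≠ p.1 := fun h => hr1 (h1 ▸ h)
            have h2 : p ≠ r := fun h => hr1 (congrArg Prod.fst h).symm
            have h3 : p.1 ≠ r.1 := Ne.symm hr1
            have h4 : p ≠ s := fun h => hs1 (congrArg Prod.fst h).symm
            have h5 : p.1 ≠ s.1 := Ne.symm hs1
            rw [if_neg h2, if_neg h3, if_neg h4, if_neg h5] at hlt
            split_ifs at hlt <;> omega
        · rintro (⟨rfl, rfl⟩ | ⟨rfl, rfl⟩)
          · refine ⟨⟨hpp', rfl⟩, ?_⟩
            simp [hqp, hqp1, hqp', hqp'1]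
          · refine ⟨⟨Ne.symm hpp', rfl⟩, ?_⟩
            simp [hqp, hqp1, hqp', hqp'1]
  rw [mCloser, hset, Set.ncard_pair]
  simp [Sym2.eq_iff]

end FGaux

theorem friendshipGraph_twoEDB (n : ℕ) (hn : 1 < n) : TwoEDB (friendshipGraph n) := by
  intro g h hd
  rcases g with _ | p <;> rcases h with _ | q
  · rw [SimpleGraph.dist_self] at hd
  · rw [FGaux.dist_hub] at hd; omega
  · rw [FGaux.dist_hub'] at hd; omega
  · rw [FGaux.dist_some_some] at hd
    have h2 : p.1 ≠ q.1 := by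
      intro h; by_cases hpq : p = q <;> simp [hpq, h] at hd
    rw [FGaux.mCloser_eq h2, FGaux.mCloser_eq (Ne.symm h2)]
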